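/- Let f : ℝ → ℝ be C^n on [a',b] with a', b integers, a' < b, n ≥ 2, and let p ≥ 0 be an integer. Define R_{np} = (-1)^n ∫_{a'}^b ∑_{|k|>p} e^{2πikx}/(2πik)^n f^{(n)}(x) dx and T_{n,p} = (2/(2π)^n)(ζ(n) - ∑_{k=1}^p k^{-n}). Then |R_{np}| ≤ T_{n,p} ∫_{a'}^b |f^{(n)}(x)| dx. -/

import Mathlib

open Real intervalIntegral

/-- `∑_{|k|>p} e^{2πikx}/(2πik)^n`. -/
noncomputable def cTail (n p : ℕ) (x : ℝ) : ℂ :=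
  ∑' k : {k : ℤ // p < k.natAbs},
    Complex.exp (2 * Real.pi * Complex.I * ((k : ℤ) : ℂ) * x) /
      (2 * Real.pi * Complex.I * ((k : ℤ) : ℂ)) ^ n

/-- `T_{n,p} = (2/(2π)^n) (ζ(n) - ∑_{k=1}^p k^{-n})` with `ζ(n) = ∑_{k≥1} k^{-n}`. -/
noncomputable def Tnp (n p : ℕ) : ℝ :=
  2 / (2 * Real.pi) ^ n *
    ((∑' k : ℕ, 1 / ((k : ℝ) + 1) ^ n) - ∑ k ∈ Finset.Icc 1 p, 1 / (k : ℝ) ^ n)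

/-- the norm bound function on `ℤ` -/
noncomputable def gBnd (n p : ℕ) (k : ℤ) : ℝ :=
  if p < k.natAbs then 1 / (2 * Real.pi * (k.natAbs : ℝ)) ^ n else 0

lemma summable_zeta (n : ℕ) (hn : 2 ≤ n) :
    Summable (fun k : ℕ => 1 / ((k : ℝ) + 1) ^ n) := by
  have h : Summable (fun k : ℕ => 1 / ((k : ℝ)) ^ n) :=
    summable_one_div_nat_pow.mpr (by omega)
  have := (summable_nat_add_iff 1).mpr h
  exact this.congr (fun k => by push_cast; ring_nf)

lemma hasSum_half (n p : ℕ) (hn : 2 ≤ n) :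
    HasSum (fun j : ℕ => gBnd n p ((j : ℤ) + 1)) (Tnp n p / 2) := by
  have hsum := summable_zeta n hn
  -- the "cut-off tail" function on ℕ
  have hkey : (fun j : ℕ => gBnd n p ((j : ℤ) + 1)) =
      fun j : ℕ => (1 / (2 * Real.pi) ^ n) *
        ((1 / ((j : ℝ) + 1) ^ n) - (if j < p then 1 / ((j : ℝ) + 1) ^ n else 0)) := by
    funext j
    have hnat : ((j : ℤ) + 1).natAbs = j + 1 := by omega
    rcases lt_or_ge j p with h | h
    · have : ¬ p < ((j : ℤ) + 1).natAbs := by omega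
      simp [gBnd, this, h]
    · have h1 : p < ((j : ℤ) + 1).natAbs := by omega
      have h2 : ¬ j < p := by omega
      simp only [gBnd, hnat, if_pos (show p < j + 1 by omega), if_neg h2, sub_zero]
      push_cast
      rw [mul_pow, ← one_div_mul_one_div]
  rw [hkey]
  have hw : HasSum (fun j : ℕ => if j < p then 1 / ((j : ℝ) + 1) ^ n else 0)
      (∑ j ∈ Finset.range p, 1 / ((j : ℝ) + 1) ^ n) := by
    have h0 := hasSum_sum_of_ne_finset_zero (L := SummationFilter.unconditional ℕ) (s := Finset.range p)
      (f := fun j : ℕ => if j < p then 1 / ((j : ℝ) + 1) ^ n else 0)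
      (by intro b hb; simp [Finset.mem_range] at hb; simp [hb])
    have he : ∑ b ∈ Finset.range p, (if b < p then 1 / ((b : ℝ) + 1) ^ n else 0)
        = ∑ j ∈ Finset.range p, 1 / ((j : ℝ) + 1) ^ n :=
      Finset.sum_congr rfl fun j hj => by simp [Finset.mem_range.mp hj]
    rw [he] at h0
    exact h0
  have hu : HasSum (fun j : ℕ => 1 / ((j : ℝ) + 1) ^ n)
      (∑' k : ℕ, 1 / ((k : ℝ) + 1) ^ n) := hsum.hasSum
  have hsub := (hu.sub hw).mul_left (1 / (2 * Real.pi) ^ n)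
  convert hsub using 1
  · rfl
  have hrange : ∀ q : ℕ, ∑ j ∈ Finset.range q, 1 / ((j : ℝ) + 1) ^ n
      = ∑ k ∈ Finset.Icc 1 q, 1 / (k : ℝ) ^ n := by
    intro q
    induction q with
    | zero => simp
    | succ q ih =>
      rw [Finset.sum_range_succ, Finset.sum_Icc_succ_top (by omega), ih]
      push_cast
      ring
  rw [Tnp, hrange p]
  ring

lemma hasSum_gBnd (n p : ℕ) (hn : 2 ≤ n) :
    HasSum (gBnd n p) (Tnp n p) := by
  have h1 := hasSum_half n p hn
  have h2 : HasSum (fun j : ℕ => gBnd n p (-((j : ℤ) + 1))) (Tnp n p / 2) := by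
    refine h1.congr_fun fun j => ?_
    unfold gBnd
    rw [show (-((j : ℤ) + 1)).natAbs = ((j : ℤ) + 1).natAbs from by omega]
  have h0 : gBnd n p 0 = 0 := by simp [gBnd]
  have := h1.of_add_one_of_neg_add_one h2
  rw [h0] at this
  convert this using 1
  ring

lemma norm_cTail_le (n p : ℕ) (hn : 2 ≤ n) (x : ℝ) : ‖cTail n p x‖ ≤ Tnp n p := by
  set s : Set ℤ := {k : ℤ | p < k.natAbs} with hs
  have hnorm : ∀ k : {k : ℤ // p < k.natAbs},
      ‖Complex.exp (2 * Real.pi * Complex.I * ((k : ℤ) : ℂ) * x) /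
        (2 * Real.pi * Complex.I * ((k : ℤ) : ℂ)) ^ n‖ = gBnd n p k := by
    rintro ⟨k, hk⟩
    have hk0 : k ≠ 0 := by
      intro h; rw [h] at hk; simp at hk
    simp only [gBnd, if_pos hk]
    rw [norm_div, norm_pow]
    have he : (2 * (Real.pi : ℂ) * Complex.I * ((k : ℤ) : ℂ) * (x : ℂ))
        = ((2 * Real.pi * (k : ℝ) * x : ℝ) : ℂ) * Complex.I := by
      push_cast; ring
    have hd : (2 * (Real.pi : ℂ) * Complex.I * ((k : ℤ) : ℂ))
        = ((2 * Real.pi * (k : ℝ) : ℝ) : ℂ) * Complex.I := by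
      push_cast; ring
    rw [he, hd]
    have h1 : ‖Complex.exp (((2 * Real.pi * (k : ℝ) * x : ℝ) : ℂ) * Complex.I)‖ = 1 :=
      Complex.norm_exp_ofReal_mul_I _
    rw [h1]
    have h2 : ‖(((2 * Real.pi * (k : ℝ) : ℝ) : ℂ) * Complex.I)‖ = 2 * Real.pi * (k.natAbs : ℝ) := by
      rw [norm_mul, Complex.norm_I, mul_one, Complex.norm_real, Real.norm_eq_abs,
        abs_mul, abs_of_pos (by positivity : (0:ℝ) < 2 * Real.pi)]
      congr 1
      rw [Nat.cast_natAbs]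
      simp [Int.cast_abs]
    rw [h2]
  -- summability of norms
  have hgs : Summable (fun k : {k : ℤ // p < k.natAbs} => gBnd n p k) := by
    have := (hasSum_gBnd n p hn).summable
    exact this.subtype _
  have hsumm : Summable (fun k : {k : ℤ // p < k.natAbs} =>
      ‖Complex.exp (2 * Real.pi * Complex.I * ((k : ℤ) : ℂ) * x) /
        (2 * Real.pi * Complex.I * ((k : ℤ) : ℂ)) ^ n‖) :=
    hgs.congr fun k => (hnorm k).symm
  calc ‖cTail n p x‖ ≤ ∑' k : {k : ℤ // p < k.natAbs},
      ‖Complex.exp (2 * Real.pi * Complex.I * ((k : ℤ) : ℂ) * x) /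
        (2 * Real.pi * Complex.I * ((k : ℤ) : ℂ)) ^ n‖ := norm_tsum_le_tsum_norm hsumm
    _ = ∑' k : {k : ℤ // p < k.natAbs}, gBnd n p k := tsum_congr hnorm
    _ ≤ Tnp n p := by
        rw [← (hasSum_gBnd n p hn).tsum_eq]
        refine Summable.tsum_subtype_le (gBnd n p) _ (fun k => ?_) (hasSum_gBnd n p hn).summable
        by_cases h : p < k.natAbs
        · simp only [gBnd, if_pos h]
          positivity
        · simp [gBnd, h]

theorem memf_remainder_estimate_A (f : ℝ → ℝ) (a' b : ℤ) (hab : a' < b)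
    (n : ℕ) (hn : 2 ≤ n) (p : ℕ)
    (hf : ContDiffOn ℝ n f (Set.Icc (a' : ℝ) (b : ℝ))) :
    ‖(-1 : ℂ) ^ n * ∫ x in (a' : ℝ)..(b : ℝ),
        cTail n p x * Complex.ofReal (iteratedDerivWithin n f (Set.Icc (a' : ℝ) (b : ℝ)) x)‖ ≤
      Tnp n p * ∫ x in (a' : ℝ)..(b : ℝ),
        |iteratedDerivWithin n f (Set.Icc (a' : ℝ) (b : ℝ)) x| := by
  have hab' : (a' : ℝ) ≤ b := by exact_mod_cast hab.le
  set φ := iteratedDerivWithin n f (Set.Icc (a' : ℝ) (b : ℝ)) with hφ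
  have hcont : ContinuousOn φ (Set.Icc (a' : ℝ) (b : ℝ)) :=
    hf.continuousOn_iteratedDerivWithin (le_refl _) (uniqueDiffOn_Icc (by exact_mod_cast hab))
  have hbound : IntervalIntegrable (fun x => Tnp n p * |φ x|) MeasureTheory.volume (a' : ℝ) b := by
    apply ContinuousOn.intervalIntegrable
    rw [Set.uIcc_of_le hab']
    exact (hcont.abs.const_smul (Tnp n p)).congr fun x hx => rfl
  rw [norm_mul, norm_pow, norm_neg, norm_one, one_pow, one_mul]
  calc ‖∫ x in (a' : ℝ)..(b : ℝ), cTail n p x * Complex.ofReal (φ x)‖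
      ≤ ∫ x in (a' : ℝ)..(b : ℝ), Tnp n p * |φ x| := by
        have hTnp : 0 ≤ Tnp n p := (norm_nonneg _).trans (norm_cTail_le n p hn 0)
        have hpt : ∀ᵐ t ∂(MeasureTheory.volume.restrict (Set.uIoc (a' : ℝ) b)),
            ‖cTail n p t * Complex.ofReal (φ t)‖ ≤ Tnp n p * |φ t| := by
          filter_upwards with x
          rw [norm_mul, Complex.norm_real, Real.norm_eq_abs]
          exact mul_le_mul_of_nonneg_right (norm_cTail_le n p hn x) (abs_nonneg _)
        have h := intervalIntegral.norm_integral_le_abs_of_norm_le hpt hbound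
        rwa [abs_of_nonneg (intervalIntegral.integral_nonneg hab'
          fun x _ => mul_nonneg hTnp (abs_nonneg _))] at h
    _ = Tnp n p * ∫ x in (a' : ℝ)..(b : ℝ), |φ x| := intervalIntegral.integral_const_mul _ _
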